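/- arXiv:2009.07630 — 2 statements merged into one kernel-verified Lean document; each statement's English description precedes it below -/
import Mathlib

section
/- Let M be a loopless matroid with weights x : E → ℝ, B an x-optimal basis, and e ∉ B. Then the minimum weight of a basis containing e equals x(B) - μ_e(x) + x(e). -/
open Matroid Set

variable {α : Type*}

/-- A circuit of a matroid: a minimal dependent set. -/
def Matroid.PaperIsCircuit (M : Matroid α) (C : Set α) : Prop :=
  M.Dep C ∧ ∀ ⦃D⦄, D ⊂ C → M.Indep D

/-- Looplessness in the sense of the paper: no element is a loop
(every singleton of the ground set is independent) and no element is a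
coloop (no element lies in all bases). -/
def Matroid.PaperLoopless (M : Matroid α) : Prop :=
  ∀ e ∈ M.E, M.Indep {e} ∧ ∃ B, M.IsBase B ∧ e ∉ B

/-- The weight `x(B)` of a set of ground elements. -/
noncomputable def setWeight (x : α → ℝ) (B : Set α) : ℝ := ∑ᶠ e ∈ B, x e

/-- The min-max weight `μ_e(x)`: the minimum over circuits `C` containing `e`
of the maximum weight of an element of `C - e`. -/
noncomputable def muWeight (M : Matroid α) (x : α → ℝ) (e : α) : ℝ :=
  sInf {w | ∃ C, M.PaperIsCircuit C ∧ e ∈ C ∧ w = sSup (x '' (C \ {e}))}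

/-- The bottleneck weight `b_e(x) = min {x(e), μ_e(x)}`. -/
noncomputable def bottleneck (M : Matroid α) (x : α → ℝ) (e : α) : ℝ :=
  min (x e) (muWeight M x e)

/-- The minimum weight of a basis of `M`. -/
noncomputable def mwb (M : Matroid α) (x : α → ℝ) : ℝ :=
  sInf {w | ∃ B, M.IsBase B ∧ w = setWeight x B}

/-- `B` is an `x`-optimal basis of `M`. -/
def IsOptimalBase (M : Matroid α) (x : α → ℝ) (B : Set α) : Prop :=
  M.IsBase B ∧ ∀ B', M.IsBase B' → setWeight x B ≤ setWeight x B'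

/-- Deletion of a single element. -/
noncomputable def Matroid.del (M : Matroid α) (e : α) : Matroid α :=
  M ↾ (M.E \ {e})

/-- Contraction of a single element, defined by duality: `M/e = (M✶ \ e)✶`. -/
noncomputable def Matroid.con (M : Matroid α) (e : α) : Matroid α :=
  ((M✶ ↾ (M.E \ {e}))✶)

/-! ### Auxiliary lemmas -/

/-- Every dependent set in a finite matroid contains a circuit. -/
lemma exists_isCircuit_subset_aux (M : Matroid α) [M.Finite] :
    ∀ n : ℕ, ∀ D : Set α, D.ncard ≤ n → M.Dep D → ∃ C, C ⊆ D ∧ M.PaperIsCircuit C := by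
  intro n
  induction n with
  | zero =>
    intro D hcard hD
    have hfin : D.Finite := M.set_finite D hD.subset_ground
    have : D = ∅ := by
      rw [← Set.ncard_eq_zero hfin]; omega
    exact absurd (this ▸ hD) (by simp [M.empty_indep.not_dep])
  | succ n ih =>
    intro D hcard hD
    by_cases h : ∀ ⦃D'⦄, D' ⊂ D → M.Indep D'
    · exact ⟨D, subset_rfl, hD, h⟩
    · push_neg at h
      obtain ⟨D', hD'D, hD'⟩ := h
      have hD'dep : M.Dep D' := by
        rw [Matroid.dep_iff]
        exact ⟨hD', hD'D.subset.trans hD.subset_ground⟩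
      have hfin : D.Finite := M.set_finite D hD.subset_ground
      have hlt : D'.ncard < D.ncard := Set.ncard_lt_ncard hD'D hfin
      obtain ⟨C, hCD', hC⟩ := ih D' (by omega) hD'dep
      exact ⟨C, hCD'.trans hD'D.subset, hC⟩

lemma exists_isCircuit_subset (M : Matroid α) [M.Finite] {D : Set α} (hD : M.Dep D) :
    ∃ C, C ⊆ D ∧ M.PaperIsCircuit C :=
  exists_isCircuit_subset_aux M D.ncard D le_rfl hD

/-- Each element of a circuit is in the closure of the rest. -/
lemma Matroid.PaperIsCircuit.mem_closure_diff {M : Matroid α} {C : Set α} (hC : M.PaperIsCircuit C) {f : α}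
    (hf : f ∈ C) : f ∈ M.closure (C \ {f}) := by
  have hind : M.Indep (C \ {f}) := hC.2 (Set.sdiff_singleton_ssubset.mpr hf)
  have hdep : M.Dep (insert f (C \ {f})) := by
    rw [Set.insert_diff_singleton, Set.insert_eq_self.mpr hf]; exact hC.1
  exact (hind.insert_dep_iff.mp hdep).1

/-- Exchange formula for weights. -/
lemma setWeight_exchange (x : α → ℝ) {B : Set α} (hB : B.Finite) {e f : α}
    (he : e ∉ B) (hf : f ∈ B) :
    setWeight x (insert e (B \ {f})) = setWeight x B - x f + x e := by
  classical
  have hfin' : (insert e (B \ {f})).Finite := hB.diff.insert e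
  have h2 : setWeight x B = ∑ i ∈ hB.toFinset, x i :=
    finsum_mem_eq_finite_toFinset_sum x hB
  have h1 : setWeight x (insert e (B \ {f})) = ∑ i ∈ hfin'.toFinset, x i :=
    finsum_mem_eq_finite_toFinset_sum x hfin'
  have h3 : hfin'.toFinset = insert e (hB.toFinset.erase f) := by
    ext y
    simp only [Set.Finite.mem_toFinset, Set.mem_insert_iff, Set.mem_diff,
      Set.mem_singleton_iff, Finset.mem_insert, Finset.mem_erase]
    tauto
  rw [h1, h2, h3, Finset.sum_insert (by simp [Set.Finite.mem_toFinset, he])]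
  have h4 : ∑ i ∈ (hB.toFinset).erase f, x i + x f = ∑ i ∈ hB.toFinset, x i :=
    Finset.sum_erase_add _ _ (by simp [Set.Finite.mem_toFinset, hf])
  linarith

/-- The key exchange lemma: given a basis `B'` containing `e` and a circuit `C`
containing `e`, some `f ∈ C \ {e}` outside `B'` can replace `e` in `B'`. -/
lemma exists_exchange {M : Matroid α} {B' C : Set α} {e : α} (hB' : M.IsBase B')
    (heB' : e ∈ B') (hC : M.PaperIsCircuit C) (heC : e ∈ C) :
    ∃ f ∈ C \ {e}, f ∉ B' ∧ M.IsBase (insert f (B' \ {e})) := by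
  by_contra h
  push_neg at h
  have hind : M.Indep (B' \ {e}) := hB'.indep.subset diff_subset
  have hsub : C \ {e} ⊆ M.closure (B' \ {e}) := by
    intro f hfCe
    by_cases hfB : f ∈ B'
    · exact M.mem_closure_of_mem ⟨hfB, hfCe.2⟩ hind.subset_ground
    · by_cases hfind : M.Indep (insert f (B' \ {e}))
      · have hne : f ≠ e := fun hfe => hfCe.2 (by simp [hfe])
        have hbase := hB'.exchange_isBase_of_indep' heB' hfB
          (by rwa [← Set.insert_diff_singleton_comm hne])
        rw [← Set.insert_diff_singleton_comm hne] at hbase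
        exact absurd hbase (h f hfCe hfB)
      · have hdep : M.Dep (insert f (B' \ {e})) := by
          rw [Matroid.dep_iff]
          exact ⟨hfind, Set.insert_subset (hC.1.subset_ground hfCe.1)
            (diff_subset.trans hB'.subset_ground)⟩
        exact (hind.insert_dep_iff.mp hdep).1
  have hcl : e ∈ M.closure (B' \ {e}) := by
    have h1 : e ∈ M.closure (C \ {e}) := hC.mem_closure_diff heC
    exact M.closure_subset_closure_of_subset_closure hsub h1
  have : M.Dep (insert e (B' \ {e})) := hind.insert_dep_iff.mpr ⟨hcl, by simp⟩
  rw [Set.insert_diff_singleton, Set.insert_eq_self.mpr heB'] at this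
  exact this.not_indep hB'.indep

/-- the minimum weight of a basis containing `e` is
`x(B) - μ_e(x) + x(e)`. -/
theorem stmt8 (M : Matroid α) [M.Finite] (hM : M.PaperLoopless)
    (x : α → ℝ) {B : Set α} (hB : IsOptimalBase M x B)
    {e : α} (he : e ∈ M.E) (heB : e ∉ B) :
    sInf {w | ∃ B', M.IsBase B' ∧ e ∈ B' ∧ w = setWeight x B'} =
      setWeight x B - muWeight M x e + x e := by
  classical
  obtain ⟨hBbase, hopt⟩ := hB
  have hEfin : M.E.Finite := M.ground_finite
  have hBfin : B.Finite := M.set_finite B hBbase.subset_ground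
  -- the μ set
  set W : Set ℝ := {w | ∃ C, M.PaperIsCircuit C ∧ e ∈ C ∧ w = sSup (x '' (C \ {e}))} with hW
  -- fundamental circuit of e w.r.t. B
  have hdepeB : M.Dep (insert e B) := hBbase.insert_dep ⟨he, heB⟩
  obtain ⟨C₀, hC₀sub, hC₀⟩ := exists_isCircuit_subset M hdepeB
  have heC₀ : e ∈ C₀ := by
    by_contra h
    have : C₀ ⊆ B := fun y hy => ((hC₀sub hy).resolve_left (fun h' => h (h' ▸ hy)))
    exact hC₀.1.not_indep (hBbase.indep.subset this)
  -- generic facts about sSup over a circuit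
  have circuit_sSup : ∀ C : Set α, M.PaperIsCircuit C → e ∈ C →
      (∃ f ∈ C \ {e}, x f = sSup (x '' (C \ {e}))) ∧
      ∀ f ∈ C \ {e}, x f ≤ sSup (x '' (C \ {e})) := by
    intro C hC heC
    have hCfin : C.Finite := M.set_finite C hC.1.subset_ground
    have hne : (C \ {e}).Nonempty := by
      rcases Set.eq_empty_or_nonempty (C \ {e}) with h | h
      · exfalso
        have : C = {e} := by
          apply Set.eq_singleton_iff_unique_mem.mpr
          refine ⟨heC, fun y hy => ?_⟩
          by_contra hy'
          exact absurd ⟨hy, hy'⟩ (h ▸ Set.notMem_empty y)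
        exact hC.1.not_indep (this ▸ (hM e he).1)
      · exact h
    have himfin : (x '' (C \ {e})).Finite := hCfin.diff.image x
    have himne : (x '' (C \ {e})).Nonempty := hne.image x
    constructor
    · obtain ⟨f, hf, hfx⟩ := himne.csSup_mem himfin
      exact ⟨f, hf, hfx⟩
    · intro f hf
      exact le_csSup himfin.bddAbove ⟨f, hf, rfl⟩
  -- W is finite and nonempty
  have hWfin : W.Finite := by
    have : W ⊆ (fun C : Set α => sSup (x '' (C \ {e}))) '' {D | D ⊆ M.E} := by
      rintro w ⟨C, hC, -, rfl⟩
      exact ⟨C, hC.1.subset_ground, rfl⟩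
    exact (hEfin.finite_subsets.image _).subset this
  have hWne : W.Nonempty := ⟨_, C₀, hC₀, heC₀, rfl⟩
  have hmu_mem : muWeight M x e ∈ W := hWne.csInf_mem hWfin
  obtain ⟨C₁, hC₁, heC₁, hmu_eq⟩ := hmu_mem
  -- the basis set S
  set S : Set ℝ := {w | ∃ B', M.IsBase B' ∧ e ∈ B' ∧ w = setWeight x B'} with hS
  have hSfin : S.Finite := by
    have : S ⊆ (setWeight x) '' {D | D ⊆ M.E} := by
      rintro w ⟨B', hB', -, rfl⟩
      exact ⟨B', hB'.subset_ground, rfl⟩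
    exact (hEfin.finite_subsets.image _).subset this
  -- upper bound: exchange a max-weight element of C₀ \ {e} out of B
  obtain ⟨⟨f₀, hf₀, hf₀x⟩, -⟩ := circuit_sSup C₀ hC₀ heC₀
  have hf₀B : f₀ ∈ B := ((hC₀sub hf₀.1).resolve_left hf₀.2)
  have hBf_indep : M.Indep (insert e (B \ {f₀})) := by
    by_contra hcon
    have hind : M.Indep (B \ {f₀}) := hBbase.indep.subset diff_subset
    have hdep : M.Dep (insert e (B \ {f₀})) := by
      rw [Matroid.dep_iff]
      exact ⟨hcon, Set.insert_subset he (diff_subset.trans hBbase.subset_ground)⟩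
    have hecl : e ∈ M.closure (B \ {f₀}) := (hind.insert_dep_iff.mp hdep).1
    have hf₀cl : f₀ ∈ M.closure (C₀ \ {f₀}) := hC₀.mem_closure_diff hf₀.1
    have hsub : C₀ \ {f₀} ⊆ insert e (B \ {f₀}) := by
      intro y hy
      rcases hC₀sub hy.1 with h | h
      · exact h ▸ Set.mem_insert y _
      · exact Set.mem_insert_of_mem _ ⟨h, hy.2⟩
    have : f₀ ∈ M.closure (insert e (B \ {f₀})) :=
      M.closure_subset_closure hsub hf₀cl
    rw [closure_insert_eq_of_mem_closure hecl] at this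
    have : M.Dep (insert f₀ (B \ {f₀})) := hind.insert_dep_iff.mpr ⟨this, by simp⟩
    rw [Set.insert_diff_singleton, Set.insert_eq_self.mpr hf₀B] at this
    exact this.not_indep hBbase.indep
  have hBf_base : M.IsBase (insert e (B \ {f₀})) :=
    hBbase.exchange_isBase_of_indep heB hBf_indep
  have hBf_weight : setWeight x (insert e (B \ {f₀})) = setWeight x B - x f₀ + x e :=
    setWeight_exchange x hBfin heB hf₀B
  have hSne : S.Nonempty := ⟨_, _, hBf_base, Set.mem_insert e _, rfl⟩
  have hmu_le : muWeight M x e ≤ x f₀ := by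
    rw [hf₀x]
    exact csInf_le hWfin.bddBelow ⟨C₀, hC₀, heC₀, rfl⟩
  refine le_antisymm ?_ ?_
  · calc sInf S ≤ setWeight x (insert e (B \ {f₀})) :=
          csInf_le hSfin.bddBelow ⟨_, hBf_base, Set.mem_insert e _, rfl⟩
      _ = setWeight x B - x f₀ + x e := hBf_weight
      _ ≤ setWeight x B - muWeight M x e + x e := by linarith
  · -- lower bound
    apply le_csInf hSne
    rintro w ⟨B', hB', heB', rfl⟩
    obtain ⟨f, hf, hfB', hBase''⟩ := exists_exchange hB' heB' hC₁ heC₁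
    have hB'fin : B'.Finite := M.set_finite B' hB'.subset_ground
    have hw : setWeight x (insert f (B' \ {e})) = setWeight x B' - x e + x f :=
      setWeight_exchange x hB'fin hfB' heB'
    have hle : setWeight x B ≤ setWeight x B' - x e + x f := hw ▸ hopt _ hBase''
    have hxf : x f ≤ muWeight M x e := by
      rw [hmu_eq]
      exact le_csSup ((M.set_finite C₁ hC₁.1.subset_ground).diff.image x).bddAbove
        ⟨f, hf, rfl⟩
    linarith
end

section
/- If all weights are nonnegative and the weight of a single element e is changed to zero (other weights unchanged), then the minimum weight of a basis decreases by exactly the bottleneck weight min{x(e), μ_e(x)} of e under the original weighting x. -/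
open Matroid Set

variable {α : Type*}

section SW

variable {x y : α → ℝ} {B : Set α} {e f : α}

lemma setWeight_eq_sum (x : α → ℝ) (hB : B.Finite) :
    setWeight x B = ∑ i ∈ hB.toFinset, x i := by
  rw [setWeight, ← finsum_mem_coe_finset, hB.coe_toFinset]

lemma setWeight_nonneg (hx : ∀ f, 0 ≤ x f) (hB : B.Finite) : 0 ≤ setWeight x B := by
  rw [setWeight_eq_sum x hB]; exact Finset.sum_nonneg fun i _ => hx i

lemma setWeight_insert (x : α → ℝ) (h : f ∉ B) (hB : B.Finite) :
    setWeight x (insert f B) = x f + setWeight x B :=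
  finsum_mem_insert x h hB

lemma setWeight_diff_singleton (x : α → ℝ) (h : e ∈ B) (hB : B.Finite) :
    setWeight x (B \ {e}) = setWeight x B - x e := by
  have h2 : e ∉ B \ {e} := fun h' => h'.2 rfl
  have h3 : insert e (B \ {e}) = B := by
    rw [Set.insert_diff_singleton, Set.insert_eq_of_mem h]
  have := setWeight_insert x h2 (hB.subset diff_subset)
  rw [h3] at this
  linarith

lemma setWeight_congr (h : ∀ i ∈ B, x i = y i) : setWeight x B = setWeight y B :=
  finsum_mem_congr rfl h

lemma setWeight_update_not_mem [DecidableEq α] (x : α → ℝ) (h : e ∉ B) :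
    setWeight (Function.update x e 0) B = setWeight x B :=
  setWeight_congr fun i hi => Function.update_of_ne (by rintro rfl; exact h hi) 0 x

lemma setWeight_update_mem [DecidableEq α] (x : α → ℝ) (h : e ∈ B) (hB : B.Finite) :
    setWeight (Function.update x e 0) B = setWeight x B - x e := by
  have h2 : e ∉ B \ {e} := fun h' => h'.2 rfl
  have h3 : insert e (B \ {e}) = B := by
    rw [Set.insert_diff_singleton, Set.insert_eq_of_mem h]
  calc setWeight (Function.update x e 0) B
      = Function.update x e 0 e + setWeight (Function.update x e 0) (B \ {e}) := by
        rw [← setWeight_insert _ h2 (hB.subset diff_subset), h3]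
    _ = setWeight x (B \ {e}) := by
        rw [Function.update_self, setWeight_update_not_mem x h2]; ring
    _ = setWeight x B - x e := setWeight_diff_singleton x h hB

end SW

section MAT

variable {M : Matroid α} {B C D : Set α} {e f : α}

lemma base_finite [M.Finite] (hB : M.IsBase B) : B.Finite :=
  M.ground_finite.subset hB.subset_ground

lemma exists_circuit_subset [M.Finite] (hD : M.Dep D) : ∃ C ⊆ D, M.PaperIsCircuit C := by
  have hDfin : D.Finite := M.ground_finite.subset hD.subset_ground
  have hfin : {C | C ⊆ D ∧ M.Dep C}.Finite :=
    hDfin.finite_subsets.subset fun C hC => hC.1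
  obtain ⟨C, ⟨hCD, hCdep⟩, hmin⟩ :=
    Set.exists_min_image _ Set.ncard hfin ⟨D, subset_rfl, hD⟩
  refine ⟨C, hCD, hCdep, fun D' hD' => ?_⟩
  by_contra hind
  have hD'E : D' ⊆ M.E := hD'.subset.trans hCdep.subset_ground
  have hdep' : M.Dep D' := (M.dep_iff).2 ⟨hind, hD'E⟩
  have h1 := hmin D' ⟨hD'.subset.trans hCD, hdep'⟩
  have h2 : D'.ncard < C.ncard := Set.ncard_lt_ncard hD' (hDfin.subset hCD)
  omega

lemma Matroid.PaperIsCircuit.diff_indep (hC : M.PaperIsCircuit C) (he : e ∈ C) :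
    M.Indep (C \ {e}) :=
  hC.2 ⟨diff_subset, fun h => (h he).2 rfl⟩

lemma Matroid.PaperIsCircuit.mem_closure_diff_s13 (hC : M.PaperIsCircuit C) (he : e ∈ C) :
    e ∈ M.closure (C \ {e}) := by
  by_contra h
  have hI := hC.diff_indep he
  have : M.Indep (insert e (C \ {e})) :=
    (hI.insert_indep_iff_of_notMem (fun h' => h'.2 rfl)).2 ⟨hC.1.subset_ground he, h⟩
  rw [Set.insert_diff_singleton, Set.insert_eq_of_mem he] at this
  exact hC.1.not_indep this

lemma exists_fund_circuit [M.Finite] (hB : M.IsBase B) (heE : e ∈ M.E) (heB : e ∉ B) :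
    ∃ C, M.PaperIsCircuit C ∧ e ∈ C ∧ C ⊆ insert e B := by
  obtain ⟨C, hCsub, hC⟩ := exists_circuit_subset (hB.insert_dep ⟨heE, heB⟩)
  have heC : e ∈ C := by
    by_contra h
    exact hC.1.not_indep (hB.indep.subset fun i hi => ((hCsub hi).elim
      (fun h' => absurd (h' ▸ hi) h) id))
  exact ⟨C, hC, heC, hCsub⟩

lemma fund_circuit_exchange (hB : M.IsBase B) (heB : e ∉ B)
    (hC : M.PaperIsCircuit C) (heC : e ∈ C) (hCsub : C ⊆ insert e B)
    (hf : f ∈ C) (hfe : f ≠ e) : M.IsBase (insert e (B \ {f})) := by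
  have hfB : f ∈ B := (hCsub hf).resolve_left hfe
  have hI : M.Indep (B \ {f}) := hB.indep.subset diff_subset
  have heE : e ∈ M.E := hC.1.subset_ground heC
  have heBf : e ∉ B \ {f} := fun h => heB h.1
  have hkey : e ∉ M.closure (B \ {f}) := by
    intro hecl
    set X := (C \ {e}) \ {f} with hX
    have hXsub : X ⊆ B \ {f} := fun i hi =>
      ⟨(hCsub hi.1.1).resolve_left hi.1.2, hi.2⟩
    have hfCe : f ∈ C \ {e} := ⟨hf, fun h => hfe h⟩
    have hins : insert f X = C \ {e} := by
      rw [hX, Set.insert_diff_singleton, Set.insert_eq_of_mem hfCe]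
    have hecl' : e ∈ M.closure (insert f X) := by
      rw [hins]; exact hC.mem_closure_diff_s13 heC
    by_cases heX : e ∈ M.closure X
    · have heX' : e ∉ X := fun h => h.1.2 rfl
      have hss : insert e X ⊂ C := by
        refine ⟨Set.insert_subset heC (fun i hi => hi.1.1), fun hsub => ?_⟩
        have := hsub hf
        rcases this with h | h
        · exact hfe h
        · exact h.2 rfl
      have hind := hC.2 hss
      have hXindep : M.Indep X := hind.subset (Set.subset_insert _ _)
      have := (hXindep.insert_indep_iff_of_notMem heX').1 hind
      exact this.2 heX
    · have hfcl := Matroid.closure_exchange ⟨hecl', heX⟩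
      have h1 : insert e X ⊆ M.closure (B \ {f}) :=
        Set.insert_subset hecl (hXsub.trans (M.subset_closure _ hI.subset_ground))
      have h2 : M.closure (insert e X) ⊆ M.closure (B \ {f}) :=
        M.closure_subset_closure_of_subset_closure h1
      exact hB.indep.notMem_closure_diff_of_mem hfB (h2 hfcl.1)
  have hins_ind : M.Indep (insert e (B \ {f})) :=
    (hI.insert_indep_iff_of_notMem heBf).2 ⟨heE, hkey⟩
  exact hB.exchange_isBase_of_indep heB hins_ind

lemma circuit_base_exchange (hB : M.IsBase B) (heB : e ∈ B)
    (hC : M.PaperIsCircuit C) (heC : e ∈ C) :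
    ∃ f, f ∈ C ∧ f ≠ e ∧ f ∉ B ∧ M.IsBase (insert f (B \ {e})) := by
  have hecl : e ∈ M.closure (C \ {e}) := hC.mem_closure_diff_s13 heC
  have hI : M.Indep (B \ {e}) := hB.indep.subset diff_subset
  have hnot : ¬ (C \ {e} ⊆ M.closure (B \ {e})) := by
    intro hsub
    have : M.closure (C \ {e}) ⊆ M.closure (B \ {e}) :=
      M.closure_subset_closure_of_subset_closure hsub
    exact hB.indep.notMem_closure_diff_of_mem heB (this hecl)
  obtain ⟨f, hfCe, hfcl⟩ := not_subset.1 hnot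
  have hfE : f ∈ M.E := hC.1.subset_ground hfCe.1
  have hfB : f ∉ B := by
    intro h
    exact hfcl (M.subset_closure _ hI.subset_ground ⟨h, hfCe.2⟩)
  have hfBe : f ∉ B \ {e} := fun h => hfB h.1
  have hind : M.Indep (insert f (B \ {e})) :=
    (hI.insert_indep_iff_of_notMem hfBe).2 ⟨hfE, hfcl⟩
  exact ⟨f, hfCe.1, fun h => hfCe.2 (h ▸ rfl), hfB, hB.exchange_isBase_of_indep hfB hind⟩

end MAT

section MAIN

variable {M : Matroid α} {B C : Set α} {e f : α}

lemma exists_optimal_base (M : Matroid α) [M.Finite] (x : α → ℝ) :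
    ∃ B, M.IsBase B ∧ setWeight x B = mwb M x ∧
      ∀ B', M.IsBase B' → mwb M x ≤ setWeight x B' := by
  have hSim : {w | ∃ B, M.IsBase B ∧ w = setWeight x B} = setWeight x '' {B | M.IsBase B} := by
    ext w
    simp only [Set.mem_setOf_eq, Set.mem_image]
    constructor
    · rintro ⟨B, hB, rfl⟩; exact ⟨B, hB, rfl⟩
    · rintro ⟨B, hB, rfl⟩; exact ⟨B, hB, rfl⟩
  have hfin : {w | ∃ B, M.IsBase B ∧ w = setWeight x B}.Finite := by
    rw [hSim]
    exact (M.ground_finite.finite_subsets.subset fun B hB => hB.subset_ground).image _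
  obtain ⟨B0, hB0⟩ := M.exists_isBase
  have hne : {w | ∃ B, M.IsBase B ∧ w = setWeight x B}.Nonempty :=
    ⟨setWeight x B0, B0, hB0, rfl⟩
  obtain ⟨B, hB, hBw⟩ := hne.csInf_mem hfin
  exact ⟨B, hB, hBw.symm, fun B' hB' => csInf_le hfin.bddBelow ⟨B', hB', rfl⟩⟩

lemma circuit_sSup_spec (hC : M.PaperIsCircuit C) (_heC : e ∈ C) (hCfin : C.Finite)
    (hsing : M.Indep {e}) (x : α → ℝ) :
    (∃ f ∈ C \ {e}, x f = sSup (x '' (C \ {e}))) ∧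
      ∀ f ∈ C \ {e}, x f ≤ sSup (x '' (C \ {e})) := by
  have hne : (C \ {e}).Nonempty := by
    by_contra h
    rw [Set.not_nonempty_iff_eq_empty, Set.diff_eq_empty] at h
    exact hC.1.not_indep (hsing.subset h)
  have hfin : (x '' (C \ {e})).Finite := (hCfin.subset diff_subset).image x
  have hne' : (x '' (C \ {e})).Nonempty := hne.image x
  obtain ⟨f, hf, hfx⟩ := hne'.csSup_mem hfin
  exact ⟨⟨f, hf, hfx⟩, fun g hg => le_csSup hfin.bddAbove (Set.mem_image_of_mem x hg)⟩

lemma mu_spec (M : Matroid α) [M.Finite] (x : α → ℝ) {e : α} {B₀ : Set α} (he : e ∈ M.E)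
    (hsing : M.Indep {e}) (hB₀ : M.IsBase B₀) (heB₀ : e ∉ B₀) (hx : ∀ f, 0 ≤ x f) :
    (∃ C, M.PaperIsCircuit C ∧ e ∈ C ∧ muWeight M x e = sSup (x '' (C \ {e}))) ∧
      (∀ C, M.PaperIsCircuit C → e ∈ C → muWeight M x e ≤ sSup (x '' (C \ {e}))) ∧
      0 ≤ muWeight M x e := by
  set T := {w | ∃ C, M.PaperIsCircuit C ∧ e ∈ C ∧ w = sSup (x '' (C \ {e}))} with hT
  have hTfin : T.Finite := by
    have h1 : {C | M.PaperIsCircuit C ∧ e ∈ C}.Finite :=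
      M.ground_finite.finite_subsets.subset fun C hC => hC.1.1.subset_ground
    refine (h1.image (fun C => sSup (x '' (C \ {e})))).subset ?_
    rintro w ⟨C, hC, heC, rfl⟩
    exact ⟨C, ⟨hC, heC⟩, rfl⟩
  have hTne : T.Nonempty := by
    obtain ⟨C₀, hC₀, heC₀, -⟩ := exists_fund_circuit hB₀ he heB₀
    exact ⟨_, C₀, hC₀, heC₀, rfl⟩
  have hμdef : muWeight M x e = sInf T := rfl
  refine ⟨?_, ?_, ?_⟩
  · rw [hμdef]
    obtain ⟨C, hC, heC, hw⟩ := hTne.csInf_mem hTfin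
    exact ⟨C, hC, heC, hw⟩
  · intro C hC heC
    rw [hμdef]
    exact csInf_le hTfin.bddBelow ⟨C, hC, heC, rfl⟩
  · rw [hμdef]
    refine le_csInf hTne ?_
    rintro w ⟨C, hC, heC, rfl⟩
    obtain ⟨⟨f, hf, hfx⟩, -⟩ :=
      circuit_sSup_spec hC heC (M.ground_finite.subset hC.1.subset_ground) hsing x
    rw [← hfx]
    exact hx f

end MAIN


/-- dropping one nonnegative weight to zero decreases the
optimal value by exactly the bottleneck weight of that element. -/
theorem stmt13 [DecidableEq α] (M : Matroid α) [M.Finite] (hM : M.PaperLoopless)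
    (x : α → ℝ) (hx : ∀ f, 0 ≤ x f) {e : α} (he : e ∈ M.E) :
    mwb M x - mwb M (Function.update x e 0) = bottleneck M x e := by

  set x' := Function.update x e 0 with hx'def
  obtain ⟨hesing, B₀, hB₀, heB₀⟩ := hM e he
  obtain ⟨⟨Cμ, hCμ, heCμ, hμeq⟩, hμle, hμ0⟩ := mu_spec M x he hesing hB₀ heB₀ hx
  obtain ⟨B, hB, hBeq, hBmin⟩ := exists_optimal_base M x
  obtain ⟨B', hB', hB'eq, hB'min⟩ := exists_optimal_base M x'
  set m := mwb M x with hm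
  set m' := mwb M x' with hm'
  set μ := muWeight M x e with hμ
  have claim1 : m' + min (x e) μ ≤ m := by
    by_cases heB : e ∈ B
    · have h1 : setWeight x' B = setWeight x B - x e :=
        setWeight_update_mem x heB (base_finite hB)
      have h2 : m' ≤ setWeight x' B := hB'min B hB
      have h3 : min (x e) μ ≤ x e := min_le_left _ _
      linarith
    · obtain ⟨C, hC, heC, hCsub⟩ := exists_fund_circuit hB he heB
      obtain ⟨⟨f, hf, hfx⟩, -⟩ :=
        circuit_sSup_spec hC heC (M.ground_finite.subset hC.1.subset_ground) hesing x
      have hfe : f ≠ e := fun h => hf.2 h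
      have hfB : f ∈ B := (hCsub hf.1).resolve_left hfe
      have hB2 : M.IsBase (insert e (B \ {f})) :=
        fund_circuit_exchange hB heB hC heC hCsub hf.1 hfe
      have hμlef : μ ≤ x f := by
        rw [hfx]; exact hμle C hC heC
      have heBf : e ∉ B \ {f} := fun h => heB h.1
      have hw : setWeight x' (insert e (B \ {f})) = setWeight x B - x f := by
        rw [setWeight_insert x' heBf ((base_finite hB).subset diff_subset),
          setWeight_update_not_mem x heBf,
          setWeight_diff_singleton x hfB (base_finite hB), hx'def,
          Function.update_self]
        ring
      have h2 : m' ≤ setWeight x' (insert e (B \ {f})) := hB'min _ hB2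
      have h3 : min (x e) μ ≤ x f := le_trans (min_le_right _ _) hμlef
      linarith
  have claim2 : m ≤ m' + x e := by
    by_cases heB' : e ∈ B'
    · have h1 : setWeight x' B' = setWeight x B' - x e :=
        setWeight_update_mem x heB' (base_finite hB')
      have h2 := hBmin B' hB'
      linarith
    · have h1 : setWeight x' B' = setWeight x B' := setWeight_update_not_mem x heB'
      have h2 := hBmin B' hB'
      linarith [hx e]
  have claim3 : m ≤ m' + μ := by
    by_cases heB' : e ∈ B'
    · obtain ⟨f, hfC, hfe, hfB', hB2⟩ := circuit_base_exchange hB' heB' hCμ heCμ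
      have hfμ : x f ≤ μ := by
        rw [hμeq]
        exact (circuit_sSup_spec hCμ heCμ
          (M.ground_finite.subset hCμ.1.subset_ground) hesing x).2 f ⟨hfC, fun h => hfe h⟩
      have hfB'e : f ∉ B' \ {e} := fun h => hfB' h.1
      have hw : setWeight x (insert f (B' \ {e})) = x f + setWeight x B' - x e := by
        rw [setWeight_insert x hfB'e ((base_finite hB').subset diff_subset),
          setWeight_diff_singleton x heB' (base_finite hB')]
        ring
      have h2 := hBmin _ hB2
      have h3 : setWeight x' B' = setWeight x B' - x e :=
        setWeight_update_mem x heB' (base_finite hB')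
      linarith
    · have h1 : setWeight x' B' = setWeight x B' := setWeight_update_not_mem x heB'
      have h2 := hBmin B' hB'
      linarith
  show m - m' = min (x e) μ
  refine le_antisymm (le_min (by linarith) (by linarith)) (by linarith)
end
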